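/- Let n ≥ 1, let Θ ∈ ℝⁿ be a row-stochastic vector with all entries positive, and let C be a fixed symmetric irreducible n×n matrix with entries in {0,1} and all diagonal entries equal to 1. For each integer k ≥ k₀ let P_k and S_k be n×n row-stochastic matrices and let W_k be the diagonal matrix with diagonal entries ω_k[i] = e^{−τk}·G_k[i], where τ > 0 and G_k[i] ∈ [0,1] (so ω_k[i] ∈ [0,1)), and set M_k = (I − W_k)P_k + W_k S_k. Assume that for every k: (i) P_k[i,i] > 0 for all i; (ii) Θ P_k = Θ; (iii) P_k[i,l] > 0 if C[i,l] = 1 and P_k[i,l] = 0 if C[i,l] = 0; and (iv) there exists γ > 0, independent of k, such that every positive entry of every M_k is at least γ. Then for every row-stochastic vector x_{k₀} ∈ ℝⁿ, the products x_{k₀}·M_{k₀}·M_{k₀+1}⋯M_{k−1} converge entrywise to Θ as k → ∞. -/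

import Mathlib

open Matrix

namespace SwarmAux

variable {n : ℕ}

def Stoch (A : Matrix (Fin n) (Fin n) ℝ) : Prop :=
  (∀ i l, 0 ≤ A i l) ∧ (∀ i, ∑ l, A i l = 1)

lemma stoch_one : Stoch (1 : Matrix (Fin n) (Fin n) ℝ) := by
  constructor
  · intro i l; by_cases h : i = l <;> simp [Matrix.one_apply, h]
  · intro i; simp [Matrix.one_apply]

lemma stoch_mul {A B : Matrix (Fin n) (Fin n) ℝ} (hA : Stoch A) (hB : Stoch B) :
    Stoch (A * B) := by
  constructor
  · intro i l
    rw [Matrix.mul_apply]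
    exact Finset.sum_nonneg fun j _ => mul_nonneg (hA.1 i j) (hB.1 j l)
  · intro i
    simp only [Matrix.mul_apply]
    rw [Finset.sum_comm]
    calc ∑ j, ∑ l, A i j * B j l = ∑ j, A i j * ∑ l, B j l := by
          simp [Finset.mul_sum]
      _ = 1 := by simp only [hB.2]; simpa using hA.2 i

lemma stoch_list_prod {L : List (Matrix (Fin n) (Fin n) ℝ)}
    (h : ∀ A ∈ L, Stoch A) : Stoch L.prod := by
  induction L with
  | nil => simpa using stoch_one
  | cons A L ih =>
      simp only [List.prod_cons]
      exact stoch_mul (h A (by simp)) (ih fun B hB => h B (by simp [hB]))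

lemma vecMul_apply' (v : Fin n → ℝ) (A : Matrix (Fin n) (Fin n) ℝ) (l : Fin n) :
    (v ᵥ* A) l = ∑ i, v i * A i l := by
  simp [Matrix.vecMul, dotProduct]

lemma norm1_vecMul_le {A : Matrix (Fin n) (Fin n) ℝ} (hA : Stoch A) (v : Fin n → ℝ) :
    ∑ l, |(v ᵥ* A) l| ≤ ∑ i, |v i| := by
  calc ∑ l, |(v ᵥ* A) l| ≤ ∑ l, ∑ i, |v i| * A i l := by
        refine Finset.sum_le_sum fun l _ => ?_
        rw [vecMul_apply']
        refine (Finset.abs_sum_le_sum_abs _ _).trans ?_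
        refine Finset.sum_le_sum fun i _ => ?_
        rw [abs_mul, abs_of_nonneg (hA.1 i l)]
    _ = ∑ i, |v i| := by
        rw [Finset.sum_comm]
        simp [← Finset.mul_sum, hA.2]

lemma dobrushin {A : Matrix (Fin n) (Fin n) ℝ} (hA : Stoch A) {δ : ℝ}
    (hδ : ∀ i l, δ ≤ A i l) {v : Fin n → ℝ} (hv : ∑ i, v i = 0) :
    ∑ l, |(v ᵥ* A) l| ≤ (1 - n * δ) * ∑ i, |v i| := by
  calc ∑ l, |(v ᵥ* A) l| ≤ ∑ l, ∑ i, |v i| * (A i l - δ) := by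
        refine Finset.sum_le_sum fun l _ => ?_
        have : (v ᵥ* A) l = ∑ i, v i * (A i l - δ) := by
          rw [vecMul_apply']
          simp [mul_sub, Finset.sum_sub_distrib, ← Finset.sum_mul, hv]
        rw [this]
        refine (Finset.abs_sum_le_sum_abs _ _).trans ?_
        refine Finset.sum_le_sum fun i _ => ?_
        rw [abs_mul, abs_of_nonneg (sub_nonneg.2 (hδ i l))]
    _ = (1 - n * δ) * ∑ i, |v i| := by
        rw [Finset.sum_comm, Finset.mul_sum]
        refine Finset.sum_congr rfl fun i _ => ?_
        rw [← Finset.mul_sum, Finset.sum_sub_distrib, hA.2 i,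
          Finset.sum_const, Finset.card_univ, Fintype.card_fin, nsmul_eq_mul]
        ring


section Pattern
variable {C : Matrix (Fin n) (Fin n) ℝ}

lemma pow_entry_nonneg (hC : ∀ i l, 0 ≤ C i l) (m : ℕ) : ∀ i l, 0 ≤ (C ^ m) i l := by
  induction m with
  | zero => intro i l; simpa using stoch_one.1 i l
  | succ m ih =>
      intro i l
      rw [pow_succ, Matrix.mul_apply]
      exact Finset.sum_nonneg fun j _ => mul_nonneg (ih i j) (hC j l)

lemma pow_pos_mono (hC : ∀ i l, 0 ≤ C i l) (hdiag : ∀ i, C i i = 1)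
    {a b : ℕ} (hab : a ≤ b) {i l : Fin n} (h : 0 < (C ^ a) i l) : 0 < (C ^ b) i l := by
  induction b, hab using Nat.le_induction with
  | base => exact h
  | succ b hab ih =>
      rw [pow_succ, Matrix.mul_apply]
      have hterm : 0 < (C ^ b) i l * C l l := by
        rw [hdiag l, mul_one]; exact ih
      calc (0:ℝ) < (C ^ b) i l * C l l := hterm
        _ ≤ ∑ j, (C ^ b) i j * C j l :=
            Finset.single_le_sum
              (fun j _ => mul_nonneg (pow_entry_nonneg hC b i j) (hC j l))
              (Finset.mem_univ l)

lemma exists_pow_all_pos (hC : ∀ i l, 0 ≤ C i l) (hdiag : ∀ i, C i i = 1)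
    (hirr : ∀ i l, ∃ m : ℕ, 0 < m ∧ 0 < (C ^ m) i l) :
    ∃ m : ℕ, 0 < m ∧ ∀ i l, 0 < (C ^ m) i l := by
  classical
  choose f hf1 hf2 using hirr
  refine ⟨max 1 ((Finset.univ : Finset (Fin n × Fin n)).sup fun p => f p.1 p.2),
    lt_of_lt_of_le one_pos (le_max_left _ _), fun i l => ?_⟩
  exact pow_pos_mono hC hdiag
    (le_trans (Finset.le_sup (Finset.mem_univ (i, l))) (le_max_right _ _)) (hf2 i l)

lemma prod_entry_lb (hC01 : ∀ i l, C i l = 0 ∨ C i l = 1) {γ : ℝ} (hγ : 0 ≤ γ) :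
    ∀ L : List (Matrix (Fin n) (Fin n) ℝ),
      (∀ A ∈ L, Stoch A ∧ ∀ i l, C i l = 1 → γ ≤ A i l) →
      ∀ i l, 0 < (C ^ L.length) i l → γ ^ L.length ≤ L.prod i l := by
  have hCnn : ∀ i l, 0 ≤ C i l := by
    intro i l; rcases hC01 i l with h | h <;> rw [h] <;> norm_num
  intro L
  induction L with
  | nil =>
      intro _ i l hpos
      simp only [List.length_nil, pow_zero, List.prod_nil] at hpos ⊢
      rcases eq_or_ne i l with rfl | hne
      · simp [Matrix.one_apply]
      · exfalso; rw [Matrix.one_apply_ne hne] at hpos; exact lt_irrefl 0 hpos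
  | cons A L ih =>
      intro h i l hpos
      rw [List.length_cons, pow_succ', Matrix.mul_apply] at hpos
      obtain ⟨j, hj⟩ : ∃ j, 0 < C i j * (C ^ L.length) j l := by
        by_contra hcon
        push_neg at hcon
        have : ∑ j, C i j * (C ^ L.length) j l ≤ 0 := Finset.sum_nonpos fun j _ => hcon j
        linarith
      have hCij : C i j = 1 := by
        rcases hC01 i j with h0 | h1
        · rw [h0, zero_mul] at hj; exact absurd hj (lt_irrefl 0)
        · exact h1
      rw [hCij, one_mul] at hj
      have hA := h A (by simp)
      have hT : ∀ B ∈ L, Stoch B ∧ ∀ i l, C i l = 1 → γ ≤ B i l :=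
        fun B hB => h B (by simp [hB])
      have hTs : Stoch L.prod := stoch_list_prod fun B hB => (hT B hB).1
      have hTlb : γ ^ L.length ≤ L.prod j l := ih hT j l hj
      rw [List.prod_cons, Matrix.mul_apply, List.length_cons]
      calc γ ^ (L.length + 1) = γ * γ ^ L.length := by ring
        _ ≤ A i j * L.prod j l :=
            mul_le_mul (hA.2 i j hCij) hTlb (pow_nonneg hγ _)
              (le_trans hγ (hA.2 i j hCij))
        _ ≤ ∑ j', A i j' * L.prod j' l :=
            Finset.single_le_sum
              (fun j' _ => mul_nonneg (hA.1.1 i j') (hTs.1 j' l))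
              (Finset.mem_univ j)

end Pattern

lemma geom_sum_le' {r : ℝ} (h0 : 0 ≤ r) (h1 : r < 1) (T : ℕ) :
    ∑ t ∈ Finset.range T, r ^ t ≤ (1 - r)⁻¹ := by
  have hpos : 0 < 1 - r := by linarith
  rw [geom_sum_eq (by linarith : r ≠ 1)]
  have heq : (r ^ T - 1) / (r - 1) = (1 - r ^ T) / (1 - r) := by
    rw [div_eq_div_iff (by linarith) (by linarith)]
    ring
  rw [heq, div_eq_mul_inv]
  have h2 : 1 - r ^ T ≤ 1 := by
    have := pow_nonneg h0 T; linarith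
  calc (1 - r ^ T) * (1 - r)⁻¹ ≤ 1 * (1 - r)⁻¹ :=
        mul_le_mul_of_nonneg_right h2 (le_of_lt (inv_pos.2 hpos))
    _ = (1 - r)⁻¹ := one_mul _

end SwarmAux


set_option maxHeartbeats 1000000 in
open SwarmAux in
/-- Under requirements (R2)-(R4) on the primary guidance matrices `P k`,
with `M k = (I - W k) * P k + W k * S k` where the diagonal weights are
`ω k i = exp (-(τ k)) * G k i`, and with a uniform positive lower bound `γ` on all
positive entries of the `M k`, every row-stochastic initial vector `x` satisfies
`x ᵥ* M k₀ * M (k₀+1) * ⋯ * M (k-1) → Θ` entrywise as `k → ∞`. -/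
theorem swarm_distribution_convergence
    (n : ℕ) (hn : 1 ≤ n)
    (Θ : Fin n → ℝ) (hΘpos : ∀ i, 0 < Θ i) (hΘsum : ∑ i, Θ i = 1)
    (C : Matrix (Fin n) (Fin n) ℝ)
    (hCsymm : ∀ i l, C i l = C l i)
    (hC01 : ∀ i l, C i l = 0 ∨ C i l = 1)
    (hCdiag : ∀ i, C i i = 1)
    (hCirr : ∀ i l, ∃ m : ℕ, 0 < m ∧ 0 < (C ^ m) i l)
    (k₀ : ℕ) (τ : ℝ) (hτ : 0 < τ)
    (P S : ℕ → Matrix (Fin n) (Fin n) ℝ)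
    (hPnn : ∀ k, k₀ ≤ k → ∀ i l, 0 ≤ P k i l)
    (hProw : ∀ k, k₀ ≤ k → ∀ i, ∑ l, P k i l = 1)
    (hSnn : ∀ k, k₀ ≤ k → ∀ i l, 0 ≤ S k i l)
    (hSrow : ∀ k, k₀ ≤ k → ∀ i, ∑ l, S k i l = 1)
    (G : ℕ → Fin n → ℝ)
    (hG : ∀ k i, 0 ≤ G k i ∧ G k i ≤ 1)
    (ω : ℕ → Fin n → ℝ)
    (hω : ∀ k i, ω k i = Real.exp (-(τ * (k : ℝ))) * G k i)
    (M : ℕ → Matrix (Fin n) (Fin n) ℝ)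
    (hM : ∀ k, k₀ ≤ k →
      M k = (1 - Matrix.diagonal (ω k)) * P k + Matrix.diagonal (ω k) * S k)
    -- (i) positive diagonal entries of `P k`
    (hPdiag : ∀ k, k₀ ≤ k → ∀ i, 0 < P k i i)
    -- (ii) `Θ` is stationary for every `P k`
    (hPstat : ∀ k, k₀ ≤ k → Θ ᵥ* P k = Θ)
    -- (iii) the sparsity pattern of `P k` is exactly `C`
    (hPCpos : ∀ k, k₀ ≤ k → ∀ i l, C i l = 1 → 0 < P k i l)
    (hPCzero : ∀ k, k₀ ≤ k → ∀ i l, C i l = 0 → P k i l = 0)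
    -- (iv) uniform positive lower bound on positive entries of `M k`
    (γ : ℝ) (hγ : 0 < γ)
    (hγlb : ∀ k, k₀ ≤ k → ∀ i l, 0 < M k i l → γ ≤ M k i l)
    (x : Fin n → ℝ) (hxnn : ∀ i, 0 ≤ x i) (hxsum : ∑ i, x i = 1) :
    ∀ i, Filter.Tendsto
      (fun k : ℕ =>
        (x ᵥ* ((List.range (k - k₀)).map (fun t => M (k₀ + t))).prod) i)
      Filter.atTop (nhds (Θ i)) := by
  classical
  -- basic facts about ω
  have hω_nn : ∀ k i, 0 ≤ ω k i := fun k i => by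
    rw [hω]; exact mul_nonneg (Real.exp_pos _).le (hG k i).1
  have hω_le : ∀ (k : ℕ) i, ω k i ≤ Real.exp (-(τ * (k : ℝ))) := fun k i => by
    rw [hω]
    calc Real.exp (-(τ * (k:ℝ))) * G k i ≤ Real.exp (-(τ * (k:ℝ))) * 1 :=
          mul_le_mul_of_nonneg_left (hG k i).2 (Real.exp_pos _).le
      _ = _ := mul_one _
  have hω_le1 : ∀ (k : ℕ) i, ω k i ≤ 1 := fun k i => by
    refine (hω_le k i).trans (Real.exp_le_one_iff.2 ?_)
    have : (0:ℝ) ≤ (k:ℝ) := Nat.cast_nonneg k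
    nlinarith
  have hω_lt1 : ∀ (k : ℕ), 1 ≤ k → ∀ i, ω k i < 1 := fun k hk i => by
    refine lt_of_le_of_lt (hω_le k i) (Real.exp_lt_one_iff.2 ?_)
    have : (1:ℝ) ≤ (k:ℝ) := by exact_mod_cast hk
    nlinarith
  -- entrywise formula for M
  have hMentry : ∀ k, k₀ ≤ k → ∀ i l,
      M k i l = (1 - ω k i) * P k i l + ω k i * S k i l := by
    intro k hk i l
    rw [hM k hk]
    have h1 : (1 - Matrix.diagonal (ω k)) =
        Matrix.diagonal (fun i => 1 - ω k i) := by
      rw [← Matrix.diagonal_one, Matrix.diagonal_sub]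
    rw [Matrix.add_apply, h1, Matrix.diagonal_mul, Matrix.diagonal_mul]
  have hMnn : ∀ k, k₀ ≤ k → ∀ i l, 0 ≤ M k i l := by
    intro k hk i l
    rw [hMentry k hk]
    have := hω_le1 k i
    have := hω_nn k i
    have := hPnn k hk i l
    have := hSnn k hk i l
    nlinarith
  have hMstoch : ∀ k, k₀ ≤ k → Stoch (M k) := by
    intro k hk
    refine ⟨hMnn k hk, fun i => ?_⟩
    calc ∑ l, M k i l
        = ∑ l, ((1 - ω k i) * P k i l + ω k i * S k i l) := by
          refine Finset.sum_congr rfl fun l _ => hMentry k hk i l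
      _ = (1 - ω k i) * ∑ l, P k i l + ω k i * ∑ l, S k i l := by
          rw [Finset.sum_add_distrib, Finset.mul_sum, Finset.mul_sum]
      _ = 1 := by rw [hProw k hk i, hSrow k hk i]; ring
  set k₁ : ℕ := max k₀ 1 with hk₁def
  have hk₁0 : k₀ ≤ k₁ := le_max_left _ _
  have hMlb : ∀ k, k₁ ≤ k → ∀ i l, C i l = 1 → γ ≤ M k i l := by
    intro k hk i l hCil
    have hk0 : k₀ ≤ k := hk₁0.trans hk
    refine hγlb k hk0 i l ?_
    rw [hMentry k hk0]
    have h1 : 0 < 1 - ω k i := by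
      have := hω_lt1 k (le_trans (le_max_right k₀ 1) hk) i; linarith
    have h2 : 0 < P k i l := hPCpos k hk0 i l hCil
    have h3 : 0 ≤ ω k i * S k i l := mul_nonneg (hω_nn k i) (hSnn k hk0 i l)
    nlinarith
  -- C facts and primitivity exponent m
  have hCnn : ∀ i l, 0 ≤ C i l := by
    intro i l; rcases hC01 i l with h | h <;> rw [h] <;> norm_num
  obtain ⟨m, hm_pos, hm_all⟩ := exists_pow_all_pos hCnn hCdiag hCirr
  set θ : ℝ := 1 - (n : ℝ) * γ ^ m with hθdef
  -- window products
  set R : ℕ → ℕ → Matrix (Fin n) (Fin n) ℝ :=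
    fun k j => ((List.range j).map fun t => M (k + t)).prod with hRdef
  have hRstoch : ∀ k, k₀ ≤ k → ∀ j, Stoch (R k j) := by
    intro k hk j
    refine stoch_list_prod fun A hA => ?_
    rw [List.mem_map] at hA
    obtain ⟨t, _, rfl⟩ := hA
    exact hMstoch (k + t) (le_trans hk (Nat.le_add_right _ _))
  have hRsucc : ∀ k j, R k (j + 1) = R k j * M (k + j) := by
    intro k j
    rw [hRdef]
    simp only [List.range_succ, List.map_append, List.prod_append,
      List.map_cons, List.map_nil, List.prod_cons, List.prod_nil, mul_one]
  have hRlb : ∀ k, k₁ ≤ k → ∀ i l, γ ^ m ≤ R k m i l := by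
    intro k hk i l
    have hlen : ((List.range m).map fun t => M (k + t)).length = m := by
      simp
    have := prod_entry_lb hC01 (le_of_lt hγ)
      ((List.range m).map fun t => M (k + t))
      (by
        intro A hA
        rw [List.mem_map] at hA
        obtain ⟨t, _, rfl⟩ := hA
        exact ⟨hMstoch (k + t) (le_trans hk₁0 (le_trans hk (Nat.le_add_right _ _))),
          fun i l h => hMlb (k + t) (le_trans hk (Nat.le_add_right _ _)) i l h⟩)
      i l (by rw [hlen]; exact hm_all i l)
    rw [hlen] at this
    exact this
  -- θ ∈ [0, 1)
  have hγm_pos : 0 < γ ^ m := pow_pos hγ m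
  have hθ_lt1 : θ < 1 := by
    rw [hθdef]
    have : 0 < (n : ℝ) * γ ^ m := by
      have hn' : (0:ℝ) < (n:ℝ) := by exact_mod_cast hn
      positivity
    linarith
  have hθ_nn : 0 ≤ θ := by
    have i0 : Fin n := ⟨0, hn⟩
    have hs := (hRstoch k₁ hk₁0 m).2 i0
    have : (n : ℝ) * γ ^ m ≤ 1 := by
      calc (n : ℝ) * γ ^ m = ∑ _l : Fin n, γ ^ m := by
            rw [Finset.sum_const, Finset.card_univ, Fintype.card_fin, nsmul_eq_mul]
        _ ≤ ∑ l, R k₁ m i0 l := Finset.sum_le_sum fun l _ => hRlb k₁ le_rfl i0 l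
        _ = 1 := hs
    rw [hθdef]; linarith
  -- sequences
  set Q : ℕ → Matrix (Fin n) (Fin n) ℝ :=
    fun k => ((List.range (k - k₀)).map (fun t => M (k₀ + t))).prod with hQdef
  set y : ℕ → Fin n → ℝ := fun k => x ᵥ* Q k with hydef
  set e : ℕ → Fin n → ℝ := fun k i => y k i - Θ i with hedef
  set a : ℕ → ℝ := fun k => ∑ i, |e k i| with hadef
  set ρ : ℝ := Real.exp (-τ) with hρdef
  set b : ℕ → ℝ := fun k => 2 * ρ ^ k with hbdef
  have hρ_nn : 0 ≤ ρ := (Real.exp_pos _).le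
  have hρ_lt1 : ρ < 1 := Real.exp_lt_one_iff.2 (by linarith)
  have hexpρ : ∀ k : ℕ, Real.exp (-(τ * (k:ℝ))) = ρ ^ k := by
    intro k
    rw [hρdef, ← Real.exp_nat_mul]
    congr 1; ring
  have hb_nn : ∀ k, 0 ≤ b k := fun k => by
    rw [hbdef]; positivity
  have hQstoch : ∀ k, Stoch (Q k) := by
    intro k
    refine stoch_list_prod fun A hA => ?_
    rw [List.mem_map] at hA
    obtain ⟨t, _, rfl⟩ := hA
    exact hMstoch (k₀ + t) (Nat.le_add_right _ _)
  have hy_nn : ∀ k i, 0 ≤ y k i := by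
    intro k i
    rw [hydef]
    simp only []
    rw [vecMul_apply']
    exact Finset.sum_nonneg fun j _ => mul_nonneg (hxnn j) ((hQstoch k).1 j i)
  have hy_sum : ∀ k, ∑ i, y k i = 1 := by
    intro k
    calc ∑ i, y k i = ∑ i, ∑ j, x j * Q k j i := by
          refine Finset.sum_congr rfl fun i _ => by rw [hydef]; exact vecMul_apply' x (Q k) i
      _ = ∑ j, x j * ∑ i, Q k j i := by
          rw [Finset.sum_comm]; simp [Finset.mul_sum]
      _ = 1 := by simp only [(hQstoch k).2]; simpa using hxsum
  have he_sum : ∀ k, ∑ i, e k i = 0 := by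
    intro k
    rw [hedef]
    simp only []
    rw [Finset.sum_sub_distrib, hy_sum k, hΘsum, sub_self]
  have ha_nn : ∀ k, 0 ≤ a k := fun k =>
    Finset.sum_nonneg fun i _ => abs_nonneg _
  have ha_le2 : ∀ k, a k ≤ 2 := by
    intro k
    calc a k ≤ ∑ i, (y k i + Θ i) := by
          refine Finset.sum_le_sum fun i _ => ?_
          have h1 := hy_nn k i
          have h2 := (hΘpos i).le
          rw [hedef]
          simp only []
          rw [abs_le]
          constructor <;> nlinarith
      _ = 2 := by rw [Finset.sum_add_distrib, hy_sum k, hΘsum]; norm_num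
  -- one step evolution
  have hQsucc : ∀ k, k₀ ≤ k → Q (k + 1) = Q k * M k := by
    intro k hk
    rw [hQdef]
    simp only []
    have h1 : k + 1 - k₀ = (k - k₀) + 1 := by omega
    have h2 : k₀ + (k - k₀) = k := by omega
    rw [h1, List.range_succ]
    simp only [List.map_append, List.prod_append, List.map_cons, List.map_nil,
      List.prod_cons, List.prod_nil, mul_one, h2]
  have hy_step : ∀ k, k₀ ≤ k → y (k + 1) = y k ᵥ* M k := by
    intro k hk
    rw [hydef]
    simp only []
    rw [hQsucc k hk, ← Matrix.vecMul_vecMul]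
  -- perturbation bound
  have hε : ∀ k, k₀ ≤ k → ∑ l, |(Θ ᵥ* M k) l - Θ l| ≤ b k := by
    intro k hk
    have hform : ∀ l, (Θ ᵥ* M k) l - Θ l
        = ∑ i, Θ i * (ω k i * (S k i l - P k i l)) := by
      intro l
      have hP : ∑ i, Θ i * P k i l = Θ l := by
        have := congrFun (hPstat k hk) l
        rwa [vecMul_apply'] at this
      rw [vecMul_apply']
      calc ∑ i, Θ i * M k i l - Θ l
          = ∑ i, Θ i * ((1 - ω k i) * P k i l + ω k i * S k i l) - Θ l := by
            congr 1
            exact Finset.sum_congr rfl fun i _ => by rw [hMentry k hk]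
        _ = (∑ i, Θ i * P k i l) + (∑ i, Θ i * (ω k i * (S k i l - P k i l))) - Θ l := by
            rw [← Finset.sum_add_distrib]
            congr 1
            exact Finset.sum_congr rfl fun i _ => by ring
        _ = ∑ i, Θ i * (ω k i * (S k i l - P k i l)) := by rw [hP]; ring
    calc ∑ l, |(Θ ᵥ* M k) l - Θ l|
        ≤ ∑ l, ∑ i, Θ i * ω k i * (S k i l + P k i l) := by
          refine Finset.sum_le_sum fun l _ => ?_
          rw [hform l]
          refine (Finset.abs_sum_le_sum_abs _ _).trans ?_
          refine Finset.sum_le_sum fun i _ => ?_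
          rw [abs_mul, abs_mul, abs_of_nonneg (hΘpos i).le, abs_of_nonneg (hω_nn k i)]
          have h1 := hSnn k hk i l
          have h2 := hPnn k hk i l
          have h3 : |S k i l - P k i l| ≤ S k i l + P k i l := by
            rw [abs_le]; constructor <;> linarith
          have h4 : 0 ≤ Θ i * ω k i := mul_nonneg (hΘpos i).le (hω_nn k i)
          calc Θ i * (ω k i * |S k i l - P k i l|)
              = Θ i * ω k i * |S k i l - P k i l| := by ring
            _ ≤ Θ i * ω k i * (S k i l + P k i l) :=
                mul_le_mul_of_nonneg_left h3 h4
      _ = ∑ i, Θ i * ω k i * 2 := by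
          rw [Finset.sum_comm]
          refine Finset.sum_congr rfl fun i _ => ?_
          rw [← Finset.mul_sum, Finset.sum_add_distrib, hSrow k hk i, hProw k hk i]
          norm_num
      _ ≤ ∑ i, Θ i * ρ ^ k * 2 := by
          refine Finset.sum_le_sum fun i _ => ?_
          have := hω_le k i
          rw [hexpρ k] at this
          have hθi := (hΘpos i).le
          nlinarith
      _ = b k := by
          rw [hbdef]
          simp only []
          rw [← Finset.sum_mul, ← Finset.sum_mul, hΘsum]
          ring
  -- window decomposition
  have hdecomp : ∀ k, k₀ ≤ k → ∀ j : ℕ, ∃ r : Fin n → ℝ,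
      e (k + j) = (e k ᵥ* R k j) + r ∧
      ∑ i, |r i| ≤ ∑ t ∈ Finset.range j, b (k + t) := by
    intro k hk j
    induction j with
    | zero =>
        refine ⟨0, ?_, by simp⟩
        have : R k 0 = 1 := by rw [hRdef]; simp
        rw [this, Matrix.vecMul_one]
        simp
    | succ j ih =>
        obtain ⟨r, hr1, hr2⟩ := ih
        refine ⟨fun i => (r ᵥ* M (k + j)) i + ((Θ ᵥ* M (k + j)) i - Θ i), ?_, ?_⟩
        · have hkj : k₀ ≤ k + j := le_trans hk (Nat.le_add_right _ _)
          have hstep := hy_step (k + j) hkj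
          funext i
          have hyi : y (k + j + 1) i = ∑ j', y (k + j) j' * M (k + j) j' i := by
            rw [hstep, vecMul_apply']
          have heRr : ∀ i', y (k + j) i' = (e k ᵥ* R k j) i' + r i' + Θ i' := by
            intro i'
            have := congrFun hr1 i'
            rw [hedef] at this
            simp only [] at this ⊢
            rw [Pi.add_apply] at this
            linarith
          have hRs : R k (j + 1) = R k j * M (k + j) := hRsucc k j
          rw [hedef]
          simp only [Pi.add_apply]
          rw [show k + (j+1) = (k + j) + 1 by omega, hyi]
          have hErM : (e k ᵥ* R k (j+1)) i + (r ᵥ* M (k+j)) i + (Θ ᵥ* M (k+j)) i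
              = ∑ j', y (k + j) j' * M (k + j) j' i := by
            rw [hRs, ← Matrix.vecMul_vecMul, vecMul_apply', vecMul_apply', vecMul_apply']
            rw [← Finset.sum_add_distrib, ← Finset.sum_add_distrib]
            refine Finset.sum_congr rfl fun j' _ => ?_
            rw [heRr j']
            ring
          linarith
        · calc ∑ i, |(r ᵥ* M (k+j)) i + ((Θ ᵥ* M (k+j)) i - Θ i)|
              ≤ ∑ i, (|(r ᵥ* M (k+j)) i| + |(Θ ᵥ* M (k+j)) i - Θ i|) := by
                refine Finset.sum_le_sum fun i _ => abs_add_le _ _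
            _ = (∑ i, |(r ᵥ* M (k+j)) i|) + ∑ i, |(Θ ᵥ* M (k+j)) i - Θ i| := by
                rw [Finset.sum_add_distrib]
            _ ≤ (∑ i, |r i|) + b (k + j) := by
                have hkj : k₀ ≤ k + j := le_trans hk (Nat.le_add_right _ _)
                exact add_le_add (norm1_vecMul_le (hMstoch (k+j) hkj) r) (hε (k+j) hkj)
            _ ≤ (∑ t ∈ Finset.range j, b (k + t)) + b (k + j) := by linarith
            _ = ∑ t ∈ Finset.range (j+1), b (k + t) := by
                rw [Finset.sum_range_succ]
  -- m-step contraction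
  have hcontr : ∀ k, k₁ ≤ k → a (k + m) ≤ θ * a k + ∑ t ∈ Finset.range m, b (k + t) := by
    intro k hk
    have hk0 : k₀ ≤ k := hk₁0.trans hk
    obtain ⟨r, hr1, hr2⟩ := hdecomp k hk0 m
    have hdob : ∑ i, |(e k ᵥ* R k m) i| ≤ θ * a k := by
      have := dobrushin (hRstoch k hk0 m) (fun i l => hRlb k hk i l) (he_sum k)
      rw [hθdef, hadef]
      exact this
    calc a (k + m) = ∑ i, |(e k ᵥ* R k m) i + r i| := by
          rw [hadef]
          simp only []
          refine Finset.sum_congr rfl fun i _ => ?_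
          rw [congrFun hr1 i]
          rfl
      _ ≤ ∑ i, (|(e k ᵥ* R k m) i| + |r i|) :=
          Finset.sum_le_sum fun i _ => abs_add_le _ _
      _ = (∑ i, |(e k ᵥ* R k m) i|) + ∑ i, |r i| := Finset.sum_add_distrib
      _ ≤ θ * a k + ∑ t ∈ Finset.range m, b (k + t) := add_le_add hdob hr2
  -- iterate the contraction
  have hiter : ∀ J : ℕ, ∀ k, k₁ ≤ k →
      a (k + J * m) ≤ θ ^ J * a k + ∑ t ∈ Finset.range (J * m), b (k + t) := by
    intro J
    induction J with
    | zero => intro k hk; simp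
    | succ J ih =>
        intro k hk
        have h1 : k + (J + 1) * m = (k + J * m) + m := by ring
        have h2 : k₁ ≤ k + J * m := le_trans hk (Nat.le_add_right _ _)
        have h3 := hcontr (k + J * m) h2
        have h4 := ih k hk
        have hsum_nn : (0:ℝ) ≤ ∑ t ∈ Finset.range (J * m), b (k + t) :=
          Finset.sum_nonneg fun t _ => hb_nn _
        have hsplit : ∑ t ∈ Finset.range ((J+1) * m), b (k + t)
            = (∑ t ∈ Finset.range (J * m), b (k + t))
              + ∑ t ∈ Finset.range m, b (k + J * m + t) := by
          rw [show (J+1) * m = J * m + m by ring, Finset.sum_range_add]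
          congr 1
          refine Finset.sum_congr rfl fun t _ => ?_
          congr 1
          omega
        rw [h1, hsplit]
        have hθa : θ * a (k + J * m)
            ≤ θ ^ (J+1) * a k + θ * ∑ t ∈ Finset.range (J * m), b (k + t) := by
          have := mul_le_mul_of_nonneg_left h4 hθ_nn
          calc θ * a (k + J * m)
              ≤ θ * (θ ^ J * a k + ∑ t ∈ Finset.range (J * m), b (k + t)) := this
            _ = θ ^ (J+1) * a k + θ * ∑ t ∈ Finset.range (J * m), b (k + t) := by ring
        have hθb : θ * ∑ t ∈ Finset.range (J * m), b (k + t)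
            ≤ ∑ t ∈ Finset.range (J * m), b (k + t) := by nlinarith
        linarith
  -- geometric tail bound
  have htail : ∀ (k T : ℕ), ∑ t ∈ Finset.range T, b (k + t) ≤ 2 * ρ ^ k * (1 - ρ)⁻¹ := by
    intro k T
    calc ∑ t ∈ Finset.range T, b (k + t)
        = 2 * ρ ^ k * ∑ t ∈ Finset.range T, ρ ^ t := by
          rw [Finset.mul_sum]
          refine Finset.sum_congr rfl fun t _ => ?_
          rw [hbdef]
          simp only []
          rw [pow_add]
          ring
      _ ≤ 2 * ρ ^ k * (1 - ρ)⁻¹ := by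
          have := geom_sum_le' hρ_nn hρ_lt1 T
          have h1 : (0:ℝ) ≤ 2 * ρ ^ k := by positivity
          nlinarith
  -- a tends to zero
  have ha_tendsto : Filter.Tendsto a Filter.atTop (nhds 0) := by
    rw [Metric.tendsto_atTop]
    intro ε hε
    obtain ⟨J, hJ⟩ := exists_pow_lt_of_lt_one (show (0:ℝ) < ε / 8 by linarith) hθ_lt1
    have hinv_pos : 0 < (1 - ρ)⁻¹ := inv_pos.2 (by linarith)
    obtain ⟨K₂, hK₂⟩ := exists_pow_lt_of_lt_one
      (mul_pos (show (0:ℝ) < ε / 4 by linarith) (show (0:ℝ) < 1 - ρ by linarith)) hρ_lt1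
    refine ⟨max k₁ K₂ + J * m, fun k hk => ?_⟩
    set k' := k - J * m with hk'def
    have hk'ge : max k₁ K₂ ≤ k' := by omega
    have hkeq : k = k' + J * m := by omega
    have h1 : a k ≤ θ ^ J * a k' + 2 * ρ ^ k' * (1 - ρ)⁻¹ := by
      rw [hkeq]
      exact le_trans (hiter J k' (le_trans (le_max_left _ _) hk'ge))
        (add_le_add_right (htail k' (J * m)) _)
    have hθJ_nn : 0 ≤ θ ^ J := pow_nonneg hθ_nn J
    have h2 : θ ^ J * a k' ≤ ε / 8 * 2 := by
      calc θ ^ J * a k' ≤ θ ^ J * 2 :=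
            mul_le_mul_of_nonneg_left (ha_le2 k') hθJ_nn
        _ ≤ ε / 8 * 2 := by linarith
    have h3 : ρ ^ k' ≤ ρ ^ K₂ :=
      pow_le_pow_of_le_one hρ_nn hρ_lt1.le (le_trans (le_max_right _ _) hk'ge)
    have h4 : 2 * ρ ^ k' * (1 - ρ)⁻¹ ≤ 2 * (ε / 4 * (1 - ρ)) * (1 - ρ)⁻¹ := by
      have h4a : ρ ^ k' ≤ ε / 4 * (1 - ρ) := le_of_lt (lt_of_le_of_lt h3 hK₂)
      have : 2 * ρ ^ k' ≤ 2 * (ε / 4 * (1 - ρ)) := by linarith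
      exact mul_le_mul_of_nonneg_right this hinv_pos.le
    have h5 : 2 * (ε / 4 * (1 - ρ)) * (1 - ρ)⁻¹ = ε / 2 := by
      have hne : (1 - ρ) ≠ 0 := by linarith
      rw [show 2 * (ε / 4 * (1 - ρ)) * (1 - ρ)⁻¹ = ε / 2 * ((1 - ρ) * (1 - ρ)⁻¹) by ring,
        mul_inv_cancel₀ hne, mul_one]
    rw [Real.dist_eq, sub_zero, abs_of_nonneg (ha_nn k)]
    linarith
  -- conclude per coordinate
  intro i
  have hcoord : ∀ k, |y k i - Θ i| ≤ a k := by
    intro k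
    rw [hadef]
    exact Finset.single_le_sum (fun i' _ => abs_nonneg (e k i')) (Finset.mem_univ i)
  have habs : Filter.Tendsto (fun k => |y k i - Θ i|) Filter.atTop (nhds 0) :=
    squeeze_zero (fun k => abs_nonneg _) hcoord ha_tendsto
  have : Filter.Tendsto (fun k => y k i) Filter.atTop (nhds (Θ i)) := by
    rw [tendsto_iff_dist_tendsto_zero]
    simpa [Real.dist_eq] using habs
  exact this
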